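/- The sum Σ_{n=1}^∞ (F_{n+2} − 1)/φ^{2n+2} equals 1/2, where F_n is the n-th Fibonacci number and φ the golden ratio. -/

import Mathlib

noncomputable def phi : ℝ := (1 + Real.sqrt 5) / 2

theorem sum_fib_div_phi_pow_eq_half :
    ∑' n : ℕ, ((Nat.fib (n + 3) : ℝ) - 1) / phi ^ (2 * (n + 1) + 2) = 1 / 2 := by
  obtain ⟨s, hsdef⟩ : ∃ s : ℝ, s = Real.sqrt 5 := ⟨_, rfl⟩
  have hs : s ^ 2 = 5 := by rw [hsdef]; exact Real.sq_sqrt (by norm_num)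
  have hs2 : 2 < s := by nlinarith [hsdef ▸ Real.sqrt_nonneg 5]
  obtain ⟨x, hxdef⟩ : ∃ x : ℝ, x = (s - 1) / 2 := ⟨_, rfl⟩
  have hx0 : 0 < x := by rw [hxdef]; linarith
  have hx1 : x < 1 := by rw [hxdef]; nlinarith
  have hphix : phi * x = 1 := by rw [hxdef]; unfold phi; rw [← hsdef]; nlinarith
  have hconj : Real.goldenConj = -x := by
    rw [hxdef, hsdef]; show (1 - Real.sqrt 5) / 2 = _; ring
  have hxx : x ^ 2 = 1 - x := by rw [hxdef]; linear_combination hs / 4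
  have hsx : s = 2 * x + 1 := by rw [hxdef]; ring
  have key : ∀ n : ℕ, ((Nat.fib (n + 3) : ℝ) - 1) / phi ^ (2 * (n + 1) + 2)
      = (x / s) * x ^ n + (x ^ 7 / s) * (-x ^ 3) ^ n - x ^ 4 * (x ^ 2) ^ n := by
    intro n
    have hfib := Real.coe_fib_eq (n + 3)
    rw [show Real.goldenRatio = phi from rfl, hconj, ← hsdef] at hfib
    have hpp : phi ^ n * x ^ n = 1 := by rw [← mul_pow, hphix, one_pow]
    have hinv : phi ^ (2 * (n + 1) + 2) = (x ^ (2 * (n + 1) + 2))⁻¹ := by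
      apply eq_inv_of_mul_eq_one_left
      rw [← mul_pow, hphix, one_pow]
    rw [hinv, div_eq_mul_inv, inv_inv, hfib]
    have e0 : (-x : ℝ) ^ (n + 3) = -((-1 : ℝ) ^ n * x ^ (n + 3)) := by
      rw [neg_pow, pow_add]; ring
    have e1 : (-x ^ 3 : ℝ) ^ n = (-1 : ℝ) ^ n * (x ^ 3) ^ n := by rw [neg_pow]
    have hsne : s ≠ 0 := by linarith
    rw [e0, e1]
    have hc : phi ^ 3 * x ^ 3 = 1 := by rw [← mul_pow, hphix, one_pow]
    field_simp
    linear_combination (phi ^ 3 * x ^ 4 * x ^ n) * hpp + (x * x ^ n) * hc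
  rw [tsum_congr key]
  have h1 : Summable (fun n : ℕ => (x / s) * x ^ n) :=
    (summable_geometric_of_lt_one hx0.le hx1).mul_left _
  have hx3 : ‖-x ^ 3‖ < 1 := by
    rw [norm_neg, norm_pow, Real.norm_eq_abs, abs_of_pos hx0]
    exact pow_lt_one₀ hx0.le hx1 (by norm_num)
  have h2 : Summable (fun n : ℕ => (x ^ 7 / s) * (-x ^ 3) ^ n) :=
    (summable_geometric_of_norm_lt_one hx3).mul_left _
  have hx2 : x ^ 2 < 1 := by nlinarith
  have h3 : Summable (fun n : ℕ => x ^ 4 * (x ^ 2) ^ n) :=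
    (summable_geometric_of_lt_one (sq_nonneg x) hx2).mul_left _
  rw [Summable.tsum_sub (h1.add h2) h3, Summable.tsum_add h1 h2, tsum_mul_left, tsum_mul_left, tsum_mul_left,
    tsum_geometric_of_lt_one hx0.le hx1, tsum_geometric_of_lt_one (sq_nonneg x) hx2,
    tsum_geometric_of_norm_lt_one hx3]
  have e1 : (1 : ℝ) - x = x ^ 2 := by linear_combination -hxx
  have e2 : (1 : ℝ) - -x ^ 3 = 2 * x := by linear_combination (x - 1) * hxx
  have e3 : (1 : ℝ) - x ^ 2 = x := by linear_combination -hxx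
  rw [e1, e2, e3, hsx]
  have hxne : x ≠ 0 := ne_of_gt hx0
  have h2x : (2 * x + 1 : ℝ) ≠ 0 := by positivity
  field_simp
  ring_nf
  linear_combination (-2 - x - x^2 - 2*x^3 - x^4 + x^5) * hxx
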